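/- Let w be a non-trivial rule word, (C,p,d) an initial configuration, and let V ⊆ ℤ² be the set of cells visited at infinitely many times t by the orbit (C_t,p_t,d_t) = T_w^t(C,p,d). Then V contains no corner: there is no cell v ∈ V such that exactly two of the four cells v+(1,0), v+(−1,0), v+(0,1), v+(0,−1) belong to V and these two neighbours lie in mutually perpendicular directions from v. -/

import Mathlib

/-- Cells of the grid `ℤ²`. -/
abbrev Cell : Type := ℤ × ℤ

/-- The two letters of a rule word. -/
inductive Letter : Type
  | L | R
deriving DecidableEq

/-- The four unit directions of `ℤ²` (the state set `Q`). -/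
inductive Dir : Type
  | E | N | W | S
deriving DecidableEq

/-- Rotation by 90° counterclockwise. -/
def Dir.left : Dir → Dir
  | .E => .N | .N => .W | .W => .S | .S => .E

/-- Rotation by 90° clockwise. -/
def Dir.right : Dir → Dir
  | .E => .S | .S => .W | .W => .N | .N => .E

/-- The unit vector of a direction. -/
def Dir.vec : Dir → Cell
  | .E => (1, 0) | .N => (0, 1) | .W => (-1, 0) | .S => (0, -1)

/-- Configurations: a picture `ℤ² → ℤ/nℤ`, a position and a direction. -/
abbrev Config (n : ℕ) : Type := (Cell → ZMod n) × Cell × Dir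

/-- One step of the generalised ant with rule word `w ∈ {L,R}⁺`:
the symbol under the ant is increased by `1 (mod |w|)`, the ant turns left or
right according to the letter `w_{C(p)}`, and moves one step in its new direction. -/
def antStepW (w : List Letter) (cfg : Config w.length) : Config w.length :=
  let C := cfg.1
  let p := cfg.2.1
  let d' := if w.getD (C p).val Letter.L = Letter.L then cfg.2.2.left else cfg.2.2.right
  (Function.update C p (C p + 1), p + d'.vec, d')

/-- The set of cells visited at infinitely many times by the orbit of `cfg`. -/
def visitedInfinitely (w : List Letter) (cfg : Config w.length) : Set Cell :=
  {v : Cell | {t : ℕ | ((antStepW w)^[t] cfg).2.1 = v}.Infinite}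
namespace AntNoCorner
variable (w : List Letter) (cfg : Config w.length)

def P (t : ℕ) : Cell := ((antStepW w)^[t] cfg).2.1
def D (t : ℕ) : Dir := ((antStepW w)^[t] cfg).2.2
def Cc (t : ℕ) : Cell → ZMod w.length := ((antStepW w)^[t] cfg).1

lemma step_D (t : ℕ) : D w cfg (t+1) =
    (if w.getD ((Cc w cfg t) (P w cfg t)).val Letter.L = Letter.L
      then (D w cfg t).left else (D w cfg t).right) := by
  simp only [D, Cc, P, Function.iterate_succ_apply', antStepW]
  rfl

lemma step_P (t : ℕ) : P w cfg (t+1) = P w cfg t + (D w cfg (t+1)).vec := by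
  rw [step_D]
  simp only [P, D, Cc, Function.iterate_succ_apply', antStepW]
  rfl

lemma step_C (t : ℕ) : Cc w cfg (t+1) =
    Function.update (Cc w cfg t) (P w cfg t) (Cc w cfg t (P w cfg t) + 1) := by
  simp only [Cc, P, Function.iterate_succ_apply', antStepW]


def horB : Dir → Bool
  | .E => true | .W => true | .N => false | .S => false

lemma horB_left (d : Dir) : horB d.left = !horB d := by cases d <;> rfl
lemma horB_right (d : Dir) : horB d.right = !horB d := by cases d <;> rfl

lemma horB_step (t : ℕ) : horB (D w cfg (t+1)) = !horB (D w cfg t) := by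
  rw [step_D]; split <;> [exact horB_left _; exact horB_right _]

lemma horB_formula (t : ℕ) :
    horB (D w cfg t) = xor (horB (D w cfg 0)) (decide (t % 2 = 1)) := by
  induction t with
  | zero => simp
  | succ t ih =>
    rw [horB_step, ih]
    have h : decide ((t+1) % 2 = 1) = !decide (t % 2 = 1) := by
      by_cases hh : t % 2 = 1 <;> simp [hh] <;> omega
    rw [h]
    cases horB (D w cfg 0) <;> cases decide (t % 2 = 1) <;> rfl

lemma horB_parity {s t : ℕ} (h : s % 2 = t % 2) :
    horB (D w cfg s) = horB (D w cfg t) := by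
  have hs' := horB_formula w cfg s
  have ht' := horB_formula w cfg t
  rw [hs', ht', h]

lemma parity (t : ℕ) :
    ((P w cfg t).1 + (P w cfg t).2 + t) % 2 = ((P w cfg 0).1 + (P w cfg 0).2) % 2 := by
  induction t with
  | zero => simp
  | succ t ih =>
    rw [step_P]
    rcases hd : D w cfg (t+1) <;>
      · simp only [Dir.vec, Prod.fst_add, Prod.snd_add]
        push_cast
        omega

lemma visit_parity {v : Cell} {s t : ℕ} (hs : P w cfg s = v) (ht : P w cfg t = v) :
    s % 2 = t % 2 := by
  have h1 := parity w cfg s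
  have h2 := parity w cfg t
  rw [hs] at h1; rw [ht] at h2
  omega


lemma Cc_visit {t : ℕ} {v : Cell} (h : P w cfg t = v) :
    Cc w cfg (t+1) v = Cc w cfg t v + 1 := by
  rw [step_C, h, Function.update_self]

lemma Cc_novisit {t : ℕ} {v : Cell} (h : P w cfg t ≠ v) :
    Cc w cfg (t+1) v = Cc w cfg t v := by
  rw [step_C, Function.update_of_ne (fun hh => h hh.symm)]

lemma Cc_const (v : Cell) (a m : ℕ) (h : ∀ j, j < m → P w cfg (a + j) ≠ v) :
    Cc w cfg (a + m) v = Cc w cfg a v := by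
  induction m with
  | zero => rfl
  | succ m ih =>
    have : a + (m+1) = (a + m) + 1 := by omega
    rw [this, Cc_novisit w cfg (h m (by omega)), ih (fun j hj => h j (by omega))]

lemma reach (v : Cell) (hinf : {t : ℕ | P w cfg t = v}.Infinite) (t₀ : ℕ)
    (h0 : P w cfg t₀ = v) (k : ℕ) :
    ∃ t, t₀ ≤ t ∧ P w cfg t = v ∧ Cc w cfg t v = Cc w cfg t₀ v + k := by
  induction k with
  | zero => exact ⟨t₀, le_refl _, h0, by simp⟩
  | succ k ih =>
    obtain ⟨t, ht0, htv, htc⟩ := ih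
    have hex : ∃ m : ℕ, P w cfg (t + 1 + m) = v := by
      obtain ⟨s, hs, hst⟩ := hinf.exists_gt t
      exact ⟨s - (t+1), by rw [show t + 1 + (s - (t+1)) = s by omega]; exact hs⟩
    set m₀ := Nat.find hex with hm₀
    refine ⟨t + 1 + m₀, by omega, Nat.find_spec hex, ?_⟩
    have hcon : Cc w cfg (t + 1 + m₀) v = Cc w cfg (t+1) v :=
      Cc_const w cfg v (t+1) m₀ (fun j hj => Nat.find_min hex hj)
    rw [hcon, Cc_visit w cfg htv, htc]
    push_cast
    ring


lemma left_ne_right (d : Dir) : d.left ≠ d.right := by cases d <;> decide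

lemma core (hL : Letter.L ∈ w) (hR : Letter.R ∈ w) (v : Cell) (din dout : Dir)
    (T : ℕ) (hinf : {t : ℕ | P w cfg t = v}.Infinite)
    (hd : ∀ t, T ≤ t → P w cfg t = v → D w cfg t = din ∧ D w cfg (t+1) = dout) :
    False := by
  have hn : 0 < w.length := List.length_pos_iff.mpr (List.ne_nil_of_mem hL)
  haveI : NeZero w.length := ⟨by omega⟩
  -- the letter read at any visit ≥ T is constant
  set ℓ₀ : Letter := if dout = din.left then Letter.L else Letter.R with hℓ₀
  have hconst : ∀ t, T ≤ t → P w cfg t = v →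
      w.getD ((Cc w cfg t) v).val Letter.L = ℓ₀ := by
    intro t hT hv
    obtain ⟨hdin, hdout⟩ := hd t hT hv
    have hstep := step_D w cfg t
    rw [hdout, hdin, hv] at hstep
    rcases hc : w.getD ((Cc w cfg t) v).val Letter.L with _ | _
    · rw [hc] at hstep
      rw [if_pos rfl] at hstep
      rw [hℓ₀, if_pos hstep]
    · rw [hc] at hstep
      rw [if_neg (by decide)] at hstep
      rw [hℓ₀, if_neg]
      intro hcon
      exact left_ne_right din (hcon.symm.trans hstep).symm.symm
  -- find a visit time ≥ T
  obtain ⟨t₀, h0v, h0T⟩ := hinf.exists_gt T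
  -- for every index i < w.length there is a visit reading letter w[i]
  have hall : ∀ i : ℕ, ∀ h : i < w.length, w[i] = ℓ₀ := by
    intro i hi
    set c₀ := Cc w cfg t₀ v with hc₀
    obtain ⟨t, htt, htv, htc⟩ :=
      reach w cfg v hinf t₀ h0v (((i : ZMod w.length) - c₀).val)
    have hcv : Cc w cfg t v = (i : ZMod w.length) := by
      rw [htc, ZMod.natCast_val, ZMod.cast_id]; ring
    have := hconst t (by omega) htv
    rw [hcv, ZMod.val_natCast_of_lt hi, List.getD_eq_getElem w _ hi] at this
    exact this
  obtain ⟨i, hi, hiL⟩ := List.mem_iff_getElem.mp hL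
  obtain ⟨j, hj, hjR⟩ := List.mem_iff_getElem.mp hR
  have h1 := (hall i hi).symm.trans hiL
  have h2 := (hall j hj).symm.trans hjR
  rw [h1] at h2
  exact Letter.noConfusion h2


lemma hd_all (v dh dv : Cell) (din dout : Dir) (T t₀ : ℕ) (hT2 : 2 ≤ T)
    (h0v : P w cfg t₀ = v)
    (hno : ∀ s, T - 1 ≤ s → P w cfg s ≠ v - dh ∧ P w cfg s ≠ v - dv)
    (H1 : horB din = horB (D w cfg t₀))
    (H3 : ∀ d : Dir, horB d = horB din → d ≠ din → (d.vec = dh ∨ d.vec = dv))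
    (H6 : ∀ d : Dir, horB d = (!horB din) → d ≠ dout →
      (d.vec = -dh ∨ d.vec = -dv)) :
    ∀ t, T ≤ t → P w cfg t = v → D w cfg t = din ∧ D w cfg (t+1) = dout := by
  intro t hTt htv
  have hax : horB (D w cfg t) = horB din :=
    (horB_parity w cfg (visit_parity w cfg htv h0v)).trans H1.symm
  have hentry : P w cfg t = P w cfg (t-1) + (D w cfg t).vec := by
    have h1 := step_P w cfg (t-1)
    rw [show t - 1 + 1 = t from by omega] at h1
    exact h1
  have hentry' : P w cfg (t-1) = v - (D w cfg t).vec := by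
    rw [htv] at hentry
    exact eq_sub_of_add_eq hentry.symm
  have hexit : P w cfg (t+1) = v + (D w cfg (t+1)).vec := by
    rw [step_P, htv]
  constructor
  · by_contra hne
    rcases H3 (D w cfg t) hax hne with h | h
    · exact (hno (t-1) (by omega)).1 (hentry'.trans (by rw [h]))
    · exact (hno (t-1) (by omega)).2 (hentry'.trans (by rw [h]))
  · have hax2 : horB (D w cfg (t+1)) = !horB din := by rw [horB_step, hax]
    by_contra hne
    rcases H6 (D w cfg (t+1)) hax2 hne with h | h
    · exact (hno (t+1) (by omega)).1 (hexit.trans (by rw [h, ← sub_eq_add_neg]))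
    · exact (hno (t+1) (by omega)).2 (hexit.trans (by rw [h, ← sub_eq_add_neg]))

lemma key (hL : Letter.L ∈ w) (hR : Letter.R ∈ w) (v dh dv : Cell)
    (hdh : dh = (1,0) ∨ dh = (-1,0)) (hdv : dv = (0,1) ∨ dv = (0,-1))
    (hv : v ∈ visitedInfinitely w cfg)
    (hNh : v - dh ∉ visitedInfinitely w cfg)
    (hNv : v - dv ∉ visitedInfinitely w cfg) : False := by
  have hinf : {t : ℕ | P w cfg t = v}.Infinite := hv
  have hfh : {t : ℕ | P w cfg t = v - dh}.Finite := Set.not_infinite.mp hNh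
  have hfv : {t : ℕ | P w cfg t = v - dv}.Finite := Set.not_infinite.mp hNv
  obtain ⟨Th, hTh⟩ := hfh.bddAbove
  obtain ⟨Tv, hTv⟩ := hfv.bddAbove
  set T := max Th Tv + 2 with hTdef
  have hno : ∀ s, T - 1 ≤ s → P w cfg s ≠ v - dh ∧ P w cfg s ≠ v - dv := by
    intro s hs
    constructor
    · intro hc
      have h1 : s ≤ Th := hTh hc
      omega
    · intro hc
      have h1 : s ≤ Tv := hTv hc
      omega
  obtain ⟨t₀, h0v, h0T⟩ := hinf.exists_gt 0
  have h0v : P w cfg t₀ = v := h0v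
  rcases hdh with rfl | rfl <;> rcases hdv with rfl | rfl <;>
    cases hb : horB (D w cfg t₀)
  · -- dh = (1,0), dv = (0,1), b = false
    refine core w cfg hL hR v Dir.S Dir.E T hinf
      (hd_all w cfg v (1,0) (0,1) Dir.S Dir.E T t₀ (by omega) h0v hno ?_ ?_ ?_)
    · rw [hb]; rfl
    · intro d; cases d <;> decide
    · intro d; cases d <;> decide
  · -- dh = (1,0), dv = (0,1), b = true
    refine core w cfg hL hR v Dir.W Dir.N T hinf
      (hd_all w cfg v (1,0) (0,1) Dir.W Dir.N T t₀ (by omega) h0v hno ?_ ?_ ?_)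
    · rw [hb]; rfl
    · intro d; cases d <;> decide
    · intro d; cases d <;> decide
  · -- dh = (1,0), dv = (0,-1), b = false
    refine core w cfg hL hR v Dir.N Dir.E T hinf
      (hd_all w cfg v (1,0) (0,-1) Dir.N Dir.E T t₀ (by omega) h0v hno ?_ ?_ ?_)
    · rw [hb]; rfl
    · intro d; cases d <;> decide
    · intro d; cases d <;> decide
  · -- dh = (1,0), dv = (0,-1), b = true
    refine core w cfg hL hR v Dir.W Dir.S T hinf
      (hd_all w cfg v (1,0) (0,-1) Dir.W Dir.S T t₀ (by omega) h0v hno ?_ ?_ ?_)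
    · rw [hb]; rfl
    · intro d; cases d <;> decide
    · intro d; cases d <;> decide
  · -- dh = (-1,0), dv = (0,1), b = false
    refine core w cfg hL hR v Dir.S Dir.W T hinf
      (hd_all w cfg v (-1,0) (0,1) Dir.S Dir.W T t₀ (by omega) h0v hno ?_ ?_ ?_)
    · rw [hb]; rfl
    · intro d; cases d <;> decide
    · intro d; cases d <;> decide
  · -- dh = (-1,0), dv = (0,1), b = true
    refine core w cfg hL hR v Dir.E Dir.N T hinf
      (hd_all w cfg v (-1,0) (0,1) Dir.E Dir.N T t₀ (by omega) h0v hno ?_ ?_ ?_)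
    · rw [hb]; rfl
    · intro d; cases d <;> decide
    · intro d; cases d <;> decide
  · -- dh = (-1,0), dv = (0,-1), b = false
    refine core w cfg hL hR v Dir.N Dir.W T hinf
      (hd_all w cfg v (-1,0) (0,-1) Dir.N Dir.W T t₀ (by omega) h0v hno ?_ ?_ ?_)
    · rw [hb]; rfl
    · intro d; cases d <;> decide
    · intro d; cases d <;> decide
  · -- dh = (-1,0), dv = (0,-1), b = true
    refine core w cfg hL hR v Dir.E Dir.S T hinf
      (hd_all w cfg v (-1,0) (0,-1) Dir.E Dir.S T t₀ (by omega) h0v hno ?_ ?_ ?_)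
    · rw [hb]; rfl
    · intro d; cases d <;> decide
    · intro d; cases d <;> decide

end AntNoCorner

/-- For a non-trivial rule word, the set `V` of cells visited
infinitely often contains no corner: no cell `v ∈ V` has exactly two of its four
orthogonal neighbours in `V` with these two neighbours in mutually perpendicular
directions from `v`. -/
theorem ant_infinitely_visited_no_corner (w : List Letter)
    (hL : Letter.L ∈ w) (hR : Letter.R ∈ w) (cfg : Config w.length) :
    ¬ ∃ v : Cell, v ∈ visitedInfinitely w cfg ∧
      ∃ d₁ d₂ : Cell,
        (d₁ = (1, 0) ∨ d₁ = (-1, 0) ∨ d₁ = (0, 1) ∨ d₁ = (0, -1)) ∧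
        (d₂ = (1, 0) ∨ d₂ = (-1, 0) ∨ d₂ = (0, 1) ∨ d₂ = (0, -1)) ∧
        d₁ ≠ d₂ ∧ d₁ ≠ -d₂ ∧
        v + d₁ ∈ visitedInfinitely w cfg ∧ v + d₂ ∈ visitedInfinitely w cfg ∧
        v - d₁ ∉ visitedInfinitely w cfg ∧ v - d₂ ∉ visitedInfinitely w cfg := by
  rintro ⟨v, hv, d₁, d₂, h1, h2, hne, hnne, hV1, hV2, hN1, hN2⟩
  rcases h1 with rfl | rfl | rfl | rfl <;> rcases h2 with rfl | rfl | rfl | rfl <;>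
  first
    | exact hne rfl
    | exact hnne (by decide)
    | exact AntNoCorner.key w cfg hL hR v _ _ (Or.inl rfl) (Or.inl rfl) hv hN1 hN2
    | exact AntNoCorner.key w cfg hL hR v _ _ (Or.inl rfl) (Or.inr rfl) hv hN1 hN2
    | exact AntNoCorner.key w cfg hL hR v _ _ (Or.inr rfl) (Or.inl rfl) hv hN1 hN2
    | exact AntNoCorner.key w cfg hL hR v _ _ (Or.inr rfl) (Or.inr rfl) hv hN1 hN2
    | exact AntNoCorner.key w cfg hL hR v _ _ (Or.inl rfl) (Or.inl rfl) hv hN2 hN1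
    | exact AntNoCorner.key w cfg hL hR v _ _ (Or.inl rfl) (Or.inr rfl) hv hN2 hN1
    | exact AntNoCorner.key w cfg hL hR v _ _ (Or.inr rfl) (Or.inl rfl) hv hN2 hN1
    | exact AntNoCorner.key w cfg hL hR v _ _ (Or.inr rfl) (Or.inr rfl) hv hN2 hN1
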